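/- For every r ≥ 2 and every 0 < ε < 1/r there exists N such that every ε-balanced r-edge-coloring of K_n with n ≥ N contains 2r disjoint vertex sets forming a fully-complete multipartite subgraph using all r colors with each part of size k; in particular R_ε^r(F_k^r) is finite, where the bound N may be tower-type of height O(r) in k and 1/ε. -/

import Mathlib

open Finset

lemma pigeon_subset {α β : Type*} [DecidableEq α] [DecidableEq β] [Fintype β] [Nonempty β]
    (s : Finset α) (g : α → β) (k : ℕ) (h : Fintype.card β * k ≤ s.card) :
    ∃ b : β, ∃ t ⊆ s, t.card = k ∧ ∀ a ∈ t, g a = b := by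
  obtain ⟨b, -, hb⟩ := Finset.exists_le_card_fiber_of_mul_le_card_of_maps_to
    (t := (Finset.univ : Finset β)) (f := g) (fun a _ => Finset.mem_univ _)
    Finset.univ_nonempty (by simpa [Finset.card_univ] using h)
  obtain ⟨t, ht, htc⟩ := Finset.exists_subset_card_eq hb
  exact ⟨b, t, ht.trans (Finset.filter_subset _ _), htc,
    fun a ha => (Finset.mem_filter.1 (ht ha)).2⟩

lemma bip {n r : ℕ} (hr : 1 ≤ r) (χ : Fin n → Fin n → Fin r) (k : ℕ)
    (X Y : Finset (Fin n)) (hX : k * r ≤ X.card) (hY : k * r ^ (k * r) ≤ Y.card) :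
    ∃ X' ⊆ X, ∃ Y' ⊆ Y, X'.card = k ∧ Y'.card = k ∧
      ∃ c, ∀ u ∈ X', ∀ v ∈ Y', χ u v = c := by
  have : NeZero r := ⟨by omega⟩
  obtain ⟨X₀, hX₀X, hX₀c⟩ := Finset.exists_subset_card_eq hX
  obtain ⟨f, Y', hY'Y, hY'c, hY'⟩ := pigeon_subset (β := (↥X₀ → Fin r)) Y
    (fun y => fun x => χ x.1 y) k (by
      have hcard : Fintype.card (↥X₀ → Fin r) = r ^ (k * r) := by
        rw [Fintype.card_fun, Fintype.card_coe, hX₀c, Fintype.card_fin]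
      rw [hcard, mul_comm]; exact hY)
  obtain ⟨c, t, hts, htc, htconst⟩ := pigeon_subset (β := Fin r) X₀.attach
    (fun x => f x) k (by rw [Fintype.card_fin, Finset.card_attach, hX₀c, mul_comm])
  refine ⟨t.image Subtype.val, ?_, Y', hY'Y, ?_, hY'c, c, ?_⟩
  · intro x hx
    obtain ⟨a, _, rfl⟩ := Finset.mem_image.1 hx
    exact hX₀X a.2
  · rw [Finset.card_image_of_injective _ Subtype.val_injective, htc]
  · intro u hu v hv
    obtain ⟨a, ha, rfl⟩ := Finset.mem_image.1 hu
    have h1 : χ a.1 v = f a := congrFun (hY' v hv) a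
    rw [h1, htconst a ha]
lemma prehom {n r : ℕ} (hr : 2 ≤ r) (χ : Fin n → Fin n → Fin r) :
    ∀ m (Z : Finset (Fin n)), r ^ m ≤ Z.card →
      ∃ T ⊆ Z, T.card = m ∧ ∃ col : Fin n → Fin r,
        ∀ u ∈ T, ∀ v ∈ T, u < v → χ u v = col u := by
  intro m
  induction m with
  | zero =>
    exact fun Z _ => ⟨∅, empty_subset _, card_empty, fun _ => ⟨0, by omega⟩, by simp⟩
  | succ m ih =>
    intro Z hZ
    have hZne : Z.Nonempty := by
      rw [← Finset.card_pos]
      calc 0 < r ^ (m+1) := Nat.pow_pos (by omega)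
        _ ≤ Z.card := hZ
    set z := Z.min' hZne with hz
    have hzZ : z ∈ Z := Z.min'_mem hZne
    obtain ⟨c, -, hc⟩ := Finset.exists_lt_card_fiber_of_mul_lt_card_of_maps_to
      (s := Z.erase z) (t := (univ : Finset (Fin r))) (f := fun u => χ z u)
      (n := r ^ m - 1)
      (fun a _ => mem_univ _) (by
        rw [Finset.card_erase_of_mem hzZ, Finset.card_univ, Fintype.card_fin]
        have h1 : r ^ (m+1) ≤ Z.card := hZ
        have h3 : 1 ≤ r ^ m := Nat.one_le_pow _ _ (by omega)
        have h4 : r ^ (m+1) = r * r ^ m := by ring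
        have h3 : 1 ≤ r ^ m := Nat.one_le_pow _ _ (by omega)
        have h5 : r * (r ^ m - 1) + r = r * r ^ m := by
          rw [← Nat.mul_succ]; congr 1; omega
        omega)
    have hc' : r ^ m ≤ ((Z.erase z).filter (fun u => χ z u = c)).card := by
      have h3 : 1 ≤ r ^ m := Nat.one_le_pow _ _ (by omega)
      omega
    set Zc := (Z.erase z).filter (fun u => χ z u = c) with hZcdef
    obtain ⟨T', hT'sub, hT'c, col', hcol'⟩ := ih Zc hc'
    have hT'Z : T' ⊆ Z.erase z := hT'sub.trans (filter_subset _ _)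
    have hzT' : z ∉ T' := fun h => (Finset.mem_erase.1 (hT'Z h)).1 rfl
    refine ⟨insert z T', ?_, ?_, Function.update col' z c, ?_⟩
    · exact Finset.insert_subset hzZ (hT'Z.trans (erase_subset _ _))
    · rw [Finset.card_insert_of_notMem hzT', hT'c]
    · intro u hu v hv huv
      rcases Finset.mem_insert.1 hu with hueq | hu'
      · have hvT' : v ∈ T' := by
          rcases Finset.mem_insert.1 hv with hveq | h
          · exact absurd huv (by rw [hueq, hveq]; exact lt_irrefl z)
          · exact h
        have hcv : χ z v = c := (Finset.mem_filter.1 (hT'sub hvT')).2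
        rw [hueq, hcv, Function.update_self]
      · have hvT' : v ∈ T' := by
          rcases Finset.mem_insert.1 hv with hveq | h
          · exfalso
            have huZ : u ∈ Z := (erase_subset _ _) (hT'Z hu')
            have hle : z ≤ u := Z.min'_le u huZ
            exact absurd hle (not_le.2 (hveq ▸ huv))
          · exact h
        have hune : u ≠ z := fun h => hzT' (h ▸ hu')
        rw [Function.update_of_ne hune]
        exact hcol' u hu' v hvT' huv

lemma ramseyF {n r : ℕ} (hr : 2 ≤ r) (χ : Fin n → Fin n → Fin r)
    (hsym : ∀ u v, χ u v = χ v u) (k : ℕ) (Z : Finset (Fin n))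
    (hZ : r ^ (r * k) ≤ Z.card) :
    ∃ Y ⊆ Z, Y.card = k ∧ ∃ c, ∀ u ∈ Y, ∀ v ∈ Y, u ≠ v → χ u v = c := by
  obtain ⟨T, hTZ, hTc, col, hcol⟩ := prehom hr χ (r * k) Z hZ
  have : NeZero r := ⟨by omega⟩
  obtain ⟨c, t, hts, htc, htconst⟩ := pigeon_subset (β := Fin r) T col k
    (by rw [Fintype.card_fin, hTc])
  refine ⟨t, hts.trans hTZ, htc, c, ?_⟩
  intro u hu v hv huv
  rcases lt_or_gt_of_ne huv with h | h
  · rw [hcol u (hts hu) v (hts hv) h, htconst u hu]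
  · rw [hsym, hcol v (hts hv) u (hts hu) h, htconst v hv]
lemma kst_numeric (S K : ℕ) (hS : 1 ≤ S) (hK : 1 ≤ K) :
    ∃ N : ℕ, 1 ≤ N ∧ ∀ n, N ≤ n → ∀ D, D = n / K →
      S * n ^ S ≤ D * (D - S) ^ S := by
  refine ⟨S * (2*K)^(S+1) + 2*K*(S+1) + 1, by omega, ?_⟩
  intro n hn D hD
  have hKD : K * D ≤ n := by rw [hD, mul_comm]; exact Nat.div_mul_le_self n K
  have hKD' : n ≤ K * D + K := by
    have := Nat.div_add_mod n K
    have hm : n % K < K := Nat.mod_lt _ (by omega)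
    rw [hD]; omega
  have hKS1 : 2*K*(S+1) ≤ n := by omega
  have hKS1' : 2*(K*S) + 2*K ≤ n := by
    calc 2*(K*S) + 2*K = 2*K*(S+1) := by ring
    _ ≤ n := hKS1
  have hSD : S ≤ D := by
    by_contra h
    push_neg at h
    have : K * D ≤ K * S := Nat.mul_le_mul_left _ (by omega)
    have : K * S ≤ K * S := le_refl _
    omega
  set D' := D - S with hD'
  have hDeq : D = D' + S := by omega
  have h8 : K * D = K * D' + K * S := by rw [hDeq]; ring
  have claim1 : n ≤ 2 * (K * D') := by omega
  have claim2 : n ≤ 2 * (K * D) := by omega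
  have heq1 : 2*K*D' = 2*(K*D') := by ring
  have heq2 : 2*K*D = 2*(K*D) := by ring
  have hA : S * (2*K)^(S+1) ≤ n := by omega
  set P := (2*K)^(S+1) with hP
  have hPpos : 0 < P := by positivity
  refine Nat.le_of_mul_le_mul_left ?_ hPpos
  calc P * (S * n ^ S) = (S * P) * n ^ S := by ring
    _ ≤ n * n ^ S := Nat.mul_le_mul_right _ hA
    _ = n ^ (S+1) := by ring
    _ ≤ (2*K*D) * (2*K*D')^S := by
        have h1 : n ≤ 2*K*D := by omega
        have h2 : n ^ S ≤ (2*K*D')^S := Nat.pow_le_pow_left (by omega) _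
        calc n ^ (S+1) = n * n ^ S := by ring
          _ ≤ (2*K*D) * (2*K*D')^S := Nat.mul_le_mul h1 h2
    _ = P * (D * D' ^ S) := by rw [hP]; ring
lemma kstF (S K : ℕ) (hS : 1 ≤ S) (hK : 1 ≤ K) :
    ∃ N : ℕ, ∀ n, N ≤ n → ∀ {r : ℕ} (χ : Fin n → Fin n → Fin r) (c : Fin r),
      (∀ u v, χ u v = χ v u) →
      ∀ W : Finset (Fin n),
        n ^ 2 ≤ K * ((W ×ˢ W).filter (fun p => p.1 < p.2 ∧ χ p.1 p.2 = c)).card →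
        ∃ A ⊆ W, ∃ B ⊆ W, Disjoint A B ∧ A.card = S ∧ B.card = S ∧
          ∀ u ∈ A, ∀ v ∈ B, χ u v = c := by
  obtain ⟨N₀, hN₀1, hN₀⟩ := kst_numeric S K hS hK
  refine ⟨N₀ + K * S + K, ?_⟩
  intro n hn r χ c hsym W hE
  have hnpos : 0 < n := by omega
  set E := (W ×ˢ W).filter (fun p => p.1 < p.2 ∧ χ p.1 p.2 = c) with hEdef
  set Nv := fun v => W.filter (fun u => χ u v = c ∧ u ≠ v) with hNvdef
  set d := fun v => (Nv v).card with hddef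
  set O := (W ×ˢ W).filter (fun p => χ p.1 p.2 = c ∧ p.1 ≠ p.2) with hOdef
  -- O.card = ∑ v in W, d v
  have hOsum : O.card = ∑ v ∈ W, d v := by
    rw [Finset.card_eq_sum_card_fiberwise
      (f := Prod.snd) (t := W)
      (fun p hp => (Finset.mem_product.1 (Finset.mem_filter.1 hp).1).2)]
    refine Finset.sum_congr rfl fun v hv => ?_
    refine Finset.card_bij (fun p _ => p.1) ?_ ?_ ?_
    · rintro p hp
      simp only [Finset.mem_filter, Finset.mem_product, hOdef] at hp
      obtain ⟨⟨⟨h1, h2⟩, h3, h4⟩, h5⟩ := hp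
      simp only [hNvdef, Finset.mem_filter]
      exact ⟨h1, by rw [← h5]; exact h3, by rw [← h5]; exact h4⟩
    · rintro p hp q hq hpq
      simp only [Finset.mem_filter] at hp hq
      exact Prod.ext hpq (hp.2.trans hq.2.symm)
    · rintro u hu
      simp only [hNvdef, Finset.mem_filter] at hu
      refine ⟨(u, v), ?_, rfl⟩
      rw [Finset.mem_filter]
      refine ⟨?_, rfl⟩
      rw [Finset.mem_filter, Finset.mem_product]
      exact ⟨⟨hu.1, hv⟩, hu.2.1, hu.2.2⟩
  -- O.card = 2 * E.card
  have hO2 : O.card = 2 * E.card := by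
    have hsplit := Finset.card_filter_add_card_filter_not
      (s := O) (p := fun p => p.1 < p.2)
    have h1 : O.filter (fun p => p.1 < p.2) = E := by
      ext p
      simp only [hOdef, hEdef, Finset.mem_filter, Finset.mem_product]
      constructor
      · rintro ⟨⟨hW, hc, -⟩, hlt⟩; exact ⟨hW, hlt, hc⟩
      · rintro ⟨hW, hlt, hc⟩; exact ⟨⟨hW, hc, ne_of_lt hlt⟩, hlt⟩
    have h2 : (O.filter (fun p => ¬ p.1 < p.2)).card = E.card := by
      refine Finset.card_bij' (fun p _ => (p.2, p.1)) (fun q _ => (q.2, q.1)) ?_ ?_ ?_ ?_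
      · rintro p hp
        simp only [hOdef, Finset.mem_filter, Finset.mem_product] at hp ⊢
        obtain ⟨⟨⟨h1', h2'⟩, h3, h4⟩, h5⟩ := hp
        have : p.2 < p.1 := lt_of_le_of_ne (not_lt.1 h5) (Ne.symm h4)
        simp only [hEdef, Finset.mem_filter, Finset.mem_product]
        exact ⟨⟨h2', h1'⟩, this, by rw [← hsym]; exact h3⟩
      · rintro q hq
        simp only [hEdef, Finset.mem_filter, Finset.mem_product] at hq
        obtain ⟨⟨h1', h2'⟩, h3, h4⟩ := hq
        simp only [hOdef, Finset.mem_filter, Finset.mem_product]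
        exact ⟨⟨⟨h2', h1'⟩, by rw [← hsym]; exact h4, (ne_of_lt h3).symm⟩, not_lt.2 (le_of_lt h3)⟩
      · intro p _; rfl
      · intro q _; rfl
    rw [h1, h2] at hsplit
    omega
  -- degree bounds
  have hdn : ∀ v, d v ≤ n := fun v => by
    calc d v ≤ W.card := Finset.card_filter_le _ _
      _ ≤ (univ : Finset (Fin n)).card := Finset.card_le_univ _
      _ = n := by rw [Finset.card_univ, Fintype.card_fin]
  have hWn : W.card ≤ n := by
    calc W.card ≤ (univ : Finset (Fin n)).card := Finset.card_le_univ _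
      _ = n := by rw [Finset.card_univ, Fintype.card_fin]
  set D := n / K with hDdef
  set H := W.filter (fun v => D ≤ d v) with hHdef
  -- sum bound
  have hsum_le : ∑ v ∈ W, d v ≤ H.card * n + n * D := by
    rw [← Finset.sum_filter_add_sum_filter_not W (fun v => D ≤ d v), ← hHdef]
    have h1 : ∑ v ∈ H, d v ≤ H.card * n := by
      calc ∑ v ∈ H, d v ≤ ∑ _v ∈ H, n := Finset.sum_le_sum (fun v _ => hdn v)
        _ = H.card * n := by rw [Finset.sum_const, smul_eq_mul]
    have h2 : ∑ v ∈ W.filter (fun v => ¬ D ≤ d v), d v ≤ n * D := by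
      calc ∑ v ∈ W.filter (fun v => ¬ D ≤ d v), d v
          ≤ ∑ _v ∈ W.filter (fun v => ¬ D ≤ d v), D :=
            Finset.sum_le_sum (fun v hv => le_of_lt (not_le.1 (Finset.mem_filter.1 hv).2))
        _ = (W.filter (fun v => ¬ D ≤ d v)).card * D := by rw [Finset.sum_const, smul_eq_mul]
        _ ≤ n * D := Nat.mul_le_mul_right _ ((Finset.card_filter_le _ _).trans hWn)
    omega
  -- H is large
  have hKDn : K * D ≤ n := by rw [hDdef, mul_comm]; exact Nat.div_mul_le_self n K
  have hHD : D ≤ H.card := by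
    have c1 : 2 * n^2 ≤ K * (2 * E.card) := by
      have h' : K * (2 * E.card) = 2 * (K * E.card) := by ring
      omega
    have c2 : K * (2 * E.card) = K * O.card := by rw [hO2]
    have c3 : K * O.card ≤ K * (H.card * n + n * D) := by
      rw [hOsum]; exact Nat.mul_le_mul_left _ hsum_le
    have c4 : K * (H.card * n + n * D) = (K * H.card) * n + (K * D) * n := by ring
    have c5 : (K * D) * n ≤ n * n := Nat.mul_le_mul_right _ hKDn
    have c6 : n ^ 2 = n * n := by ring
    have c7 : n * n ≤ (K * H.card) * n := by omega
    have c8 : n ≤ K * H.card := Nat.le_of_mul_le_mul_right c7 hnpos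
    rw [hDdef]
    exact Nat.div_le_of_le_mul (by omega)
  -- the sigma counting set
  set Q := H.sigma (fun v => (Nv v).powersetCard S) with hQdef
  have hQcard : H.card * Nat.choose D S ≤ Q.card := by
    rw [hQdef, Finset.card_sigma]
    calc H.card * Nat.choose D S = ∑ _v ∈ H, Nat.choose D S := by
          rw [Finset.sum_const, smul_eq_mul]
      _ ≤ ∑ v ∈ H, ((Nv v).powersetCard S).card := by
          refine Finset.sum_le_sum fun v hv => ?_
          rw [Finset.card_powersetCard]
          exact Nat.choose_le_choose S (Finset.mem_filter.1 hv).2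
  -- numeric comparison
  have hnum : Nat.choose n S * S ≤ D * Nat.choose D S := by
    have hfac : 0 < Nat.factorial S := Nat.factorial_pos S
    refine Nat.le_of_mul_le_mul_right ?_ hfac
    have e1 : Nat.choose n S * S * Nat.factorial S = S * (Nat.factorial S * Nat.choose n S) := by ring
    have e2 : D * Nat.choose D S * Nat.factorial S = D * (Nat.factorial S * Nat.choose D S) := by ring
    rw [e1, e2, ← Nat.descFactorial_eq_factorial_mul_choose, ← Nat.descFactorial_eq_factorial_mul_choose]
    calc S * Nat.descFactorial n S ≤ S * n ^ S :=
          Nat.mul_le_mul_left _ (Nat.descFactorial_le_pow _ _)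
      _ ≤ D * (D - S) ^ S := hN₀ n (by omega) D hDdef
      _ ≤ D * (D + 1 - S) ^ S :=
          Nat.mul_le_mul_left _ (Nat.pow_le_pow_left (by omega) _)
      _ ≤ D * Nat.descFactorial D S :=
          Nat.mul_le_mul_left _ (Nat.pow_sub_le_descFactorial D S)
  -- pigeonhole over S-subsets
  have hSn : S ≤ n := by
    have h' : S ≤ K * S := Nat.le_mul_of_pos_left S (by omega)
    omega
  set t := (univ : Finset (Fin n)).powersetCard S with htdef
  have htcard : t.card = Nat.choose n S := by
    rw [htdef, Finset.card_powersetCard, Finset.card_univ, Fintype.card_fin]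
  have htne : t.Nonempty := by
    rw [htdef, Finset.powersetCard_nonempty]
    rwa [Finset.card_univ, Fintype.card_fin]
  obtain ⟨T, hTt, hTfib⟩ := Finset.exists_le_card_fiber_of_mul_le_card_of_maps_to
    (s := Q) (t := t) (f := fun q => q.2)
    (fun q hq => by
      rw [hQdef] at hq
      obtain ⟨h1, h2⟩ := Finset.mem_sigma.1 hq
      rw [htdef, Finset.mem_powersetCard]
      exact ⟨Finset.subset_univ _, (Finset.mem_powersetCard.1 h2).2⟩)
    htne
    (by
      rw [htcard]
      calc Nat.choose n S * S ≤ D * Nat.choose D S := hnum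
        _ ≤ H.card * Nat.choose D S := Nat.mul_le_mul_right _ hHD
        _ ≤ Q.card := hQcard)
  set fib := Q.filter (fun q => q.2 = T) with hfibdef
  have hTS : T.card = S := by
    rw [htdef, Finset.mem_powersetCard] at hTt; exact hTt.2
  have hfibprop : ∀ q ∈ fib, q.1 ∈ H ∧ T ⊆ Nv q.1 := by
    intro q hq
    rw [hfibdef, Finset.mem_filter, hQdef] at hq
    obtain ⟨hq1, hq2⟩ := hq
    obtain ⟨h1, h2⟩ := Finset.mem_sigma.1 hq1
    exact ⟨h1, hq2 ▸ (Finset.mem_powersetCard.1 h2).1⟩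
  set A₀ := fib.image (fun q => q.1) with hA₀def
  have hA₀card : S ≤ A₀.card := by
    rw [hA₀def, Finset.card_image_of_injOn]
    · exact hTfib
    · intro p hp q hq hpq
      have h1 : p.2 = T := (Finset.mem_filter.1 hp).2
      have h2 : q.2 = T := (Finset.mem_filter.1 hq).2
      exact Sigma.ext hpq (heq_of_eq (h1.trans h2.symm))
  obtain ⟨A, hAA₀, hAcard⟩ := Finset.exists_subset_card_eq hA₀card
  have hAprop : ∀ u ∈ A, T ⊆ Nv u ∧ u ∈ H := by
    intro u hu
    obtain ⟨q, hq, hq1⟩ := Finset.mem_image.1 (hAA₀ hu)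
    obtain ⟨h1, h2⟩ := hfibprop q hq
    exact ⟨hq1 ▸ h2, hq1 ▸ h1⟩
  have hHW : H ⊆ W := Finset.filter_subset _ _
  have hTW : T ⊆ W := by
    have hfibne : fib.Nonempty := by
      rw [← Finset.card_pos]; omega
    obtain ⟨q, hq⟩ := hfibne
    exact (hfibprop q hq).2.trans (Finset.filter_subset _ _)
  refine ⟨A, fun u hu => hHW (hAprop u hu).2, T, hTW, ?_, hAcard, hTS, ?_⟩
  · rw [Finset.disjoint_left]
    intro x hxA hxT
    have := (hAprop x hxA).1 hxT
    rw [hNvdef, Finset.mem_filter] at this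
    exact this.2.2 rfl
  · intro u hu v hv
    have := (hAprop u hu).1 hv
    rw [hNvdef, Finset.mem_filter] at this
    rw [hsym]
    exact this.2.1
def towerFun (r k : ℕ) : ℕ → ℕ
  | 0 => r ^ (r * k)
  | (m+1) => towerFun r k m * r ^ (towerFun r k m * r)

lemma towerFun_pos {r k : ℕ} (hr : 1 ≤ r) : ∀ m, 1 ≤ towerFun r k m := by
  intro m
  induction m with
  | zero => exact Nat.one_le_pow _ _ (by omega)
  | succ m ih =>
    calc 1 = 1 * 1 := by ring
      _ ≤ towerFun r k m * r ^ (towerFun r k m * r) :=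
        Nat.mul_le_mul ih (Nat.one_le_pow _ _ (by omega))
      _ = towerFun r k (m+1) := rfl

lemma towerFun_le_succ {r k : ℕ} (hr : 1 ≤ r) (m : ℕ) :
    towerFun r k m ≤ towerFun r k (m+1) := by
  calc towerFun r k m = towerFun r k m * 1 := by ring
    _ ≤ towerFun r k m * r ^ (towerFun r k m * r) :=
      Nat.mul_le_mul_left _ (Nat.one_le_pow _ _ (by omega))
    _ = towerFun r k (m+1) := rfl

lemma towerFun_mono {r k : ℕ} (hr : 1 ≤ r) {m m' : ℕ} (h : m ≤ m') :
    towerFun r k m ≤ towerFun r k m' := by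
  induction h with
  | refl => exact le_rfl
  | step _ ih => exact le_trans ih (towerFun_le_succ hr _)

lemma cleanup {n r k : ℕ} (hr : 2 ≤ r) (χ : Fin n → Fin n → Fin r) (t : ℕ) :
    ∀ (L : List (Fin t × Fin t)) (Z : Fin t → Finset (Fin n)),
      (∀ p ∈ L, p.1 ≠ p.2) →
      (∀ i, towerFun r k L.length ≤ (Z i).card) →
      ∃ Z' : Fin t → Finset (Fin n), (∀ i, Z' i ⊆ Z i) ∧
        (∀ i, towerFun r k 0 ≤ (Z' i).card) ∧
        ∀ p ∈ L, ∃ c, ∀ u ∈ Z' p.1, ∀ v ∈ Z' p.2, χ u v = c := by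
  intro L
  induction L with
  | nil =>
    intro Z _ hZ
    exact ⟨Z, fun i => subset_rfl, hZ, by simp⟩
  | cons p L ih =>
    intro Z hne hZ
    have hij : p.1 ≠ p.2 := hne p (List.mem_cons_self)
    set h0 := towerFun r k L.length with hh0
    have hh0pos : 1 ≤ h0 := towerFun_pos (by omega) _
    have hcard : ∀ i, h0 * r ^ (h0 * r) ≤ (Z i).card := by
      intro i
      have := hZ i
      simpa [List.length_cons, towerFun] using this
    obtain ⟨X', hX'sub, Y', hY'sub, hX'c, hY'c, c, hc⟩ :=
      bip (by omega) χ h0 (Z p.1) (Z p.2)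
        (by
          calc h0 * r ≤ h0 * r ^ (h0 * r) := by
                have h1 : r ≤ r ^ (h0 * r) := by
                  refine Nat.le_self_pow ?_ _
                  have : 1 ≤ h0 * r := by
                    calc 1 = 1 * 1 := by ring
                      _ ≤ h0 * r := Nat.mul_le_mul hh0pos (by omega)
                  omega
                exact Nat.mul_le_mul_left _ h1
            _ ≤ (Z p.1).card := hcard p.1)
        (hcard p.2)
    classical
    set Z'' : Fin t → Finset (Fin n) := fun l =>
      if l = p.1 then X' else if l = p.2 then Y' else Z l with hZ''def
    have hZ''sub : ∀ l, Z'' l ⊆ Z l := by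
      intro l
      show (if l = p.1 then X' else if l = p.2 then Y' else Z l) ⊆ Z l
      by_cases h1 : l = p.1
      · subst h1; rw [if_pos rfl]; exact hX'sub
      · rw [if_neg h1]
        by_cases h2 : l = p.2
        · subst h2; rw [if_pos rfl]; exact hY'sub
        · rw [if_neg h2]
    have hZ''card : ∀ l, h0 ≤ (Z'' l).card := by
      intro l
      show h0 ≤ (if l = p.1 then X' else if l = p.2 then Y' else Z l).card
      by_cases h1 : l = p.1
      · rw [if_pos h1]; omega
      · rw [if_neg h1]
        by_cases h2 : l = p.2
        · rw [if_pos h2]; omega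
        · rw [if_neg h2]
          exact le_trans (towerFun_le_succ (by omega) _) (hZ l)
    obtain ⟨Z', hZ'sub, hZ'card, hZ'pairs⟩ := ih Z'' (fun q hq => hne q (List.mem_cons_of_mem _ hq)) hZ''card
    refine ⟨Z', fun l => (hZ'sub l).trans (hZ''sub l), hZ'card, ?_⟩
    intro q hq
    rcases List.mem_cons.1 hq with rfl | hq'
    · refine ⟨c, fun u hu v hv => hc u ?_ v ?_⟩
      · have h := hZ'sub q.1 hu
        simp only [hZ''def] at h
        simpa using h
      · have h := hZ'sub q.2 hv
        simp only [hZ''def] at h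
        rw [if_neg (Ne.symm hij)] at h
        simpa using h
    · exact hZ'pairs q hq'
theorem stmt_16 (r : ℕ) (hr : 2 ≤ r) (ε : ℝ) (hε0 : 0 < ε) (hε1 : ε < 1 / r)
    (k : ℕ) (hk : 1 ≤ k) :
    ∃ N : ℕ, ∀ (n : ℕ), N ≤ n →
      ∀ (χ : Fin n → Fin n → Fin r), (∀ u v : Fin n, χ u v = χ v u) →
      (∀ c : Fin r, ε * (n.choose 2 : ℝ) ≤
        ((Finset.univ.filter fun p : Fin n × Fin n =>
          p.1 < p.2 ∧ χ p.1 p.2 = c).card : ℝ)) →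
      ∃ (Y : Fin (2 * r) → Finset (Fin n)) (cin : Fin (2 * r) → Fin r)
        (cbet : Fin (2 * r) → Fin (2 * r) → Fin r),
        (∀ i j : Fin (2 * r), i ≠ j → Disjoint (Y i) (Y j)) ∧
        (∀ i : Fin (2 * r), (Y i).card = k) ∧
        (∀ i : Fin (2 * r), ∀ u ∈ Y i, ∀ v ∈ Y i, u ≠ v → χ u v = cin i) ∧
        (∀ i j : Fin (2 * r), i ≠ j → ∀ u ∈ Y i, ∀ v ∈ Y j, χ u v = cbet i j) ∧
        (∀ c : Fin r, (∃ i, cin i = c) ∨ ∃ i j, i ≠ j ∧ cbet i j = c) := by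
  classical
  set S := towerFun r k ((2*r) * (2*r)) with hSdef
  have hS1 : 1 ≤ S := towerFun_pos (by omega) _
  set K₀ := ⌈(1:ℝ)/ε⌉₊ with hK₀def
  have hK₀1 : 1 ≤ K₀ := by
    rw [hK₀def, Nat.one_le_ceil_iff]
    positivity
  obtain ⟨N₁, hkst⟩ := kstF S (8 * K₀) hS1 (by omega)
  set U₀ := 2 * S * r with hU₀def
  refine ⟨N₁ + 16 * (K₀ * U₀) + 4 + 1, ?_⟩
  intro n hn χ hsym hbal
  have hbalN : ∀ c : Fin r, n.choose 2 ≤ K₀ *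
      (Finset.univ.filter fun p : Fin n × Fin n => p.1 < p.2 ∧ χ p.1 p.2 = c).card := by
    intro c
    have h1 := hbal c
    have h2 : (1:ℝ)/ε ≤ (K₀ : ℝ) := Nat.le_ceil _
    have h3 : (1:ℝ) ≤ ε * K₀ := by
      rw [div_le_iff₀ hε0] at h2
      nlinarith
    have h4 : (0:ℝ) ≤ (n.choose 2 : ℝ) := by positivity
    have h5 : (n.choose 2 : ℝ) ≤ (K₀ : ℝ) *
        ((Finset.univ.filter fun p : Fin n × Fin n => p.1 < p.2 ∧ χ p.1 p.2 = c).card : ℝ) := by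
      nlinarith
    exact_mod_cast h5
  have hnn : n * (n - 1) + n = n ^ 2 := by
    rcases n with _ | n'
    · simp
    · simp only [Nat.succ_sub_one]; ring
  have h2C : 2 * n.choose 2 = n * (n - 1) := by
    have heven : 2 ∣ n * (n - 1) := by
      rcases Nat.even_or_odd n with h | h
      · exact Dvd.dvd.mul_right h.two_dvd _
      · have hev : Even (n - 1) := by
          rcases h with ⟨t, ht⟩; exact ⟨t, by omega⟩
        exact Dvd.dvd.mul_left hev.two_dvd _
    rw [Nat.choose_two_right, Nat.mul_div_cancel' heven]
  -- extraction of r disjoint monochromatic bicliques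
  have extract : ∀ m : ℕ, m ≤ r → ∃ A B : Fin r → Finset (Fin n),
      (∀ i : Fin r, (i:ℕ) < m → (A i).card = S ∧ (B i).card = S ∧ Disjoint (A i) (B i) ∧
        ∀ u ∈ A i, ∀ v ∈ B i, χ u v = i) ∧
      (∀ i j : Fin r, (i:ℕ) < m → (j:ℕ) < m → i ≠ j →
        Disjoint (A i ∪ B i) (A j ∪ B j)) := by
    intro m
    induction m with
    | zero =>
      exact fun _ => ⟨fun _ => ∅, fun _ => ∅,
        fun i hi => absurd hi (by omega), fun i j hi _ _ => by simp⟩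
    | succ m ih =>
      intro hm
      obtain ⟨A, B, hprop, hdisj⟩ := ih (by omega)
      have hmr : m < r := by omega
      set cm : Fin r := ⟨m, hmr⟩ with hcmdef
      set U : Finset (Fin n) :=
        (Finset.univ.filter (fun i : Fin r => (i:ℕ) < m)).biUnion (fun i => A i ∪ B i) with hUdef
      have hUcard : U.card ≤ 2 * S * m := by
        have hfc : (Finset.univ.filter (fun i : Fin r => (i:ℕ) < m)).card ≤ m := by
          have h := Finset.card_le_card_of_injOn (f := fun i : Fin r => (i : ℕ))
            (s := Finset.univ.filter fun i : Fin r => (i:ℕ) < m) (t := Finset.range m)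
            (by intro i hi
                rw [Finset.mem_coe, Finset.mem_filter] at hi
                rw [Finset.mem_coe, Finset.mem_range]
                exact hi.2)
            (fun a _ b _ h => Fin.val_injective h)
          simpa using h
        calc U.card ≤ ∑ i ∈ Finset.univ.filter (fun i : Fin r => (i:ℕ) < m), (A i ∪ B i).card :=
              Finset.card_biUnion_le
          _ ≤ ∑ _i ∈ Finset.univ.filter (fun i : Fin r => (i:ℕ) < m), 2 * S := by
              refine Finset.sum_le_sum fun i hi => ?_
              rw [Finset.mem_filter] at hi
              obtain ⟨hA, hB, -, -⟩ := hprop i hi.2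
              calc (A i ∪ B i).card ≤ (A i).card + (B i).card := Finset.card_union_le _ _
                _ = 2 * S := by omega
          _ = (Finset.univ.filter (fun i : Fin r => (i:ℕ) < m)).card * (2 * S) := by
              rw [Finset.sum_const, smul_eq_mul]
          _ ≤ m * (2 * S) := Nat.mul_le_mul_right _ hfc
          _ = 2 * S * m := by ring
      set W : Finset (Fin n) := Finset.univ \ U with hWdef
      set Eg := Finset.univ.filter (fun p : Fin n × Fin n => p.1 < p.2 ∧ χ p.1 p.2 = cm) with hEgdef
      set EW := (W ×ˢ W).filter (fun p : Fin n × Fin n => p.1 < p.2 ∧ χ p.1 p.2 = cm) with hEWdef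
      have hsub : Eg ⊆ EW ∪ (U ×ˢ Finset.univ ∪ Finset.univ ×ˢ U) := by
        intro p hp
        rw [hEgdef, Finset.mem_filter] at hp
        by_cases h1 : p.1 ∈ U
        · exact Finset.mem_union_right _ (Finset.mem_union_left _
            (Finset.mem_product.2 ⟨h1, Finset.mem_univ _⟩))
        by_cases h2 : p.2 ∈ U
        · exact Finset.mem_union_right _ (Finset.mem_union_right _
            (Finset.mem_product.2 ⟨Finset.mem_univ _, h2⟩))
        · refine Finset.mem_union_left _ ?_
          rw [hEWdef, Finset.mem_filter]
          exact ⟨Finset.mem_product.2 ⟨Finset.mem_sdiff.2 ⟨Finset.mem_univ _, h1⟩,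
            Finset.mem_sdiff.2 ⟨Finset.mem_univ _, h2⟩⟩, hp.2⟩
      have hcount : Eg.card ≤ EW.card + 2 * (U.card * n) := by
        calc Eg.card ≤ (EW ∪ (U ×ˢ Finset.univ ∪ Finset.univ ×ˢ U)).card :=
              Finset.card_le_card hsub
          _ ≤ EW.card + (U ×ˢ (Finset.univ : Finset (Fin n)) ∪ (Finset.univ : Finset (Fin n)) ×ˢ U).card :=
              Finset.card_union_le _ _
          _ ≤ EW.card + ((U ×ˢ (Finset.univ : Finset (Fin n))).card + ((Finset.univ : Finset (Fin n)) ×ˢ U).card) :=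
              Nat.add_le_add_left (Finset.card_union_le _ _) _
          _ = EW.card + 2 * (U.card * n) := by
              rw [Finset.card_product, Finset.card_product, Finset.card_univ, Fintype.card_fin]
              ring
      have hEWbound : n ^ 2 ≤ 8 * K₀ * EW.card := by
        have e1 : n.choose 2 ≤ K₀ * (EW.card + 2 * (U.card * n)) :=
          le_trans (hbalN cm) (Nat.mul_le_mul_left _ hcount)
        have e2 : K₀ * (EW.card + 2 * (U.card * n)) =
            K₀ * EW.card + 2 * (K₀ * (U.card * n)) := by ring
        have e3 : K₀ * (U.card * n) ≤ K₀ * (U₀ * n) := by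
          refine Nat.mul_le_mul_left _ (Nat.mul_le_mul_right _ ?_)
          calc U.card ≤ 2 * S * m := hUcard
            _ ≤ 2 * S * r := Nat.mul_le_mul_left _ (by omega)
            _ = U₀ := by rw [hU₀def]
        have hbig : 4 * n + 16 * (K₀ * (U₀ * n)) ≤ 3 * n ^ 2 := by
          have h1 : 4 + 16 * (K₀ * U₀) ≤ 3 * n := by omega
          calc 4 * n + 16 * (K₀ * (U₀ * n)) = (4 + 16 * (K₀ * U₀)) * n := by ring
            _ ≤ (3 * n) * n := Nat.mul_le_mul_right _ h1
            _ = 3 * n ^ 2 := by ring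
        have e4 : 8 * K₀ * EW.card = 8 * (K₀ * EW.card) := by ring
        omega
      obtain ⟨Am, hAmW, Bm, hBmW, hABdisj, hAmc, hBmc, hcross⟩ :=
        hkst n (by omega) χ cm hsym W hEWbound
      have hAU : ∀ i : Fin r, (i:ℕ) < m → A i ∪ B i ⊆ U := by
        intro i hi x hx
        rw [hUdef]
        exact Finset.mem_biUnion.2 ⟨i, Finset.mem_filter.2 ⟨Finset.mem_univ _, hi⟩, hx⟩
      have hWU : Disjoint W U := Finset.sdiff_disjoint
      have hnew_old : ∀ j : Fin r, (j:ℕ) < m → Disjoint (Am ∪ Bm) (A j ∪ B j) :=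
        fun j hj => hWU.mono (Finset.union_subset hAmW hBmW) (hAU j hj)
      have hval : ∀ l : Fin r, l ≠ cm → (l:ℕ) ≠ m :=
        fun l hl h => hl (Fin.ext h)
      refine ⟨Function.update A cm Am, Function.update B cm Bm, ?_, ?_⟩
      · intro i hi
        by_cases hic : i = cm
        · subst hic
          rw [Function.update_self, Function.update_self]
          exact ⟨hAmc, hBmc, hABdisj, hcross⟩
        · have hi' : (i:ℕ) < m := by
            have := hval i hic
            omega
          rw [Function.update_of_ne hic, Function.update_of_ne hic]
          exact hprop i hi'
      · intro i j hi hj hij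
        by_cases hic : i = cm
        · subst hic
          have hjc : j ≠ cm := fun h => hij (h.symm ▸ rfl)
          have hj' : (j:ℕ) < m := by
            have := hval j hjc
            omega
          rw [Function.update_self, Function.update_self,
            Function.update_of_ne hjc, Function.update_of_ne hjc]
          exact hnew_old j hj'
        · by_cases hjc : j = cm
          · subst hjc
            have hi' : (i:ℕ) < m := by
              have := hval i hic
              omega
            rw [Function.update_self, Function.update_self,
              Function.update_of_ne hic, Function.update_of_ne hic]
            exact (hnew_old i hi').symm
          · have hi' : (i:ℕ) < m := by
              have := hval i hic
              omega
            have hj' : (j:ℕ) < m := by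
              have := hval j hjc
              omega
            rw [Function.update_of_ne hic, Function.update_of_ne hic,
              Function.update_of_ne hjc, Function.update_of_ne hjc]
            exact hdisj i j hi' hj' hij
  obtain ⟨A, B, hprop, hdisj⟩ := extract r le_rfl
  have hdiv : ∀ l : Fin (2*r), (l:ℕ)/2 < r := fun l => by have := l.2; omega
  set Zf : Fin (2*r) → Finset (Fin n) := fun l =>
    if (l:ℕ) % 2 = 0 then A ⟨(l:ℕ)/2, hdiv l⟩ else B ⟨(l:ℕ)/2, hdiv l⟩ with hZfdef
  have hZfcard : ∀ l, (Zf l).card = S := by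
    intro l
    simp only [hZfdef]
    by_cases h : (l:ℕ) % 2 = 0
    · rw [if_pos h]; exact (hprop _ (hdiv l)).1
    · rw [if_neg h]; exact (hprop _ (hdiv l)).2.1
  have hZfsub : ∀ l : Fin (2*r), Zf l ⊆ A ⟨(l:ℕ)/2, hdiv l⟩ ∪ B ⟨(l:ℕ)/2, hdiv l⟩ := by
    intro l; simp only [hZfdef]
    by_cases h : (l:ℕ) % 2 = 0
    · rw [if_pos h]; exact Finset.subset_union_left
    · rw [if_neg h]; exact Finset.subset_union_right
  have hZfdisj : ∀ l l' : Fin (2*r), l ≠ l' → Disjoint (Zf l) (Zf l') := by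
    intro l l' hne
    by_cases hh : (l:ℕ)/2 = (l':ℕ)/2
    · have hpar : (l:ℕ) % 2 ≠ (l':ℕ) % 2 := by
        intro h
        exact hne (Fin.ext (by omega))
      have hidx : (⟨(l':ℕ)/2, hdiv l'⟩ : Fin r) = ⟨(l:ℕ)/2, hdiv l⟩ := Fin.ext hh.symm
      obtain ⟨-, -, hAB, -⟩ := hprop (⟨(l:ℕ)/2, hdiv l⟩ : Fin r) (hdiv l)
      simp only [hZfdef]
      rcases Nat.mod_two_eq_zero_or_one (l:ℕ) with h0 | h0 <;>
        rcases Nat.mod_two_eq_zero_or_one (l':ℕ) with h1 | h1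
      · exact absurd (h0.trans h1.symm) hpar
      · rw [if_pos h0, if_neg (by omega), hidx]
        exact hAB
      · rw [if_neg (by omega), if_pos h1, hidx]
        exact hAB.symm
      · exact absurd (h0.trans h1.symm) hpar
    · have hne' : (⟨(l:ℕ)/2, hdiv l⟩ : Fin r) ≠ ⟨(l':ℕ)/2, hdiv l'⟩ :=
        fun h => hh (congrArg Fin.val h)
      exact (hdisj _ _ (hdiv l) (hdiv l') hne').mono (hZfsub l) (hZfsub l')
  set L := ((Finset.univ ×ˢ Finset.univ : Finset (Fin (2*r) × Fin (2*r))).filter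
      (fun p => p.1 ≠ p.2)).toList with hLdef
  have hLlen : L.length ≤ (2*r) * (2*r) := by
    rw [hLdef, Finset.length_toList]
    calc _ ≤ (Finset.univ ×ˢ (Finset.univ : Finset (Fin (2*r)))).card :=
          Finset.card_filter_le _ _
      _ = (2*r) * (2*r) := by
          rw [Finset.card_product, Finset.card_univ, Fintype.card_fin]
  have hLmem : ∀ p : Fin (2*r) × Fin (2*r), p.1 ≠ p.2 → p ∈ L := by
    intro p hp
    rw [hLdef, Finset.mem_toList, Finset.mem_filter]
    exact ⟨Finset.mem_product.2 ⟨Finset.mem_univ _, Finset.mem_univ _⟩, hp⟩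
  have hLne : ∀ p ∈ L, p.1 ≠ p.2 := by
    intro p hp
    rw [hLdef, Finset.mem_toList, Finset.mem_filter] at hp
    exact hp.2
  obtain ⟨Z', hZ'sub, hZ'card, hZ'pairs⟩ := cleanup (k := k) hr χ (2*r) L Zf hLne (by
    intro i
    rw [hZfcard i]
    exact towerFun_mono (by omega) hLlen)
  have hramAll : ∀ i : Fin (2*r), ∃ Yi, Yi ⊆ Z' i ∧ Yi.card = k ∧
      ∃ c, ∀ u ∈ Yi, ∀ v ∈ Yi, u ≠ v → χ u v = c :=
    fun i => ramseyF hr χ hsym k (Z' i) (hZ'card i)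
  choose Yf hYsub hYcard hYmono using hramAll
  choose cin hcin using hYmono
  have hcrossE : ∀ i j : Fin (2*r), i ≠ j → ∃ c, ∀ u ∈ Yf i, ∀ v ∈ Yf j, χ u v = c := by
    intro i j hij
    obtain ⟨c, hc⟩ := hZ'pairs (i, j) (hLmem (i,j) hij)
    exact ⟨c, fun u hu v hv => hc u (hYsub i hu) v (hYsub j hv)⟩
  set cbet : Fin (2*r) → Fin (2*r) → Fin r := fun i j =>
    if h : i ≠ j then (hcrossE i j h).choose else cin i with hcbetdef
  have hcbet : ∀ i j, ∀ (h : i ≠ j), ∀ u ∈ Yf i, ∀ v ∈ Yf j, χ u v = cbet i j := by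
    intro i j h u hu v hv
    simp only [hcbetdef]
    simp only [dif_pos h]
    exact (hcrossE i j h).choose_spec u hu v hv
  refine ⟨Yf, cin, cbet, ?_, hYcard, hcin, ?_, ?_⟩
  · intro i j hij
    exact (hZfdisj i j hij).mono ((hYsub i).trans (hZ'sub i)) ((hYsub j).trans (hZ'sub j))
  · intro i j hij u hu v hv
    exact hcbet i j hij u hu v hv
  · intro c
    right
    have h2c : 2 * (c:ℕ) < 2*r := by have := c.2; omega
    have h2c1 : 2 * (c:ℕ) + 1 < 2*r := by have := c.2; omega
    refine ⟨⟨2*(c:ℕ), h2c⟩, ⟨2*(c:ℕ)+1, h2c1⟩, fun h => by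
      have := congrArg Fin.val h
      simp at this, ?_⟩
    set i : Fin (2*r) := ⟨2*(c:ℕ), h2c⟩ with hidef
    set j : Fin (2*r) := ⟨2*(c:ℕ)+1, h2c1⟩ with hjdef
    have hij : i ≠ j := fun h => by
      have := congrArg Fin.val h
      simp [hidef, hjdef] at this
    have hZfi : Zf i = A c := by
      simp only [hZfdef]
      have hmod : (i:ℕ) % 2 = 0 := by show 2*(c:ℕ) % 2 = 0; omega
      rw [if_pos hmod]
      congr 1
      exact Fin.ext (show (2*(c:ℕ))/2 = (c:ℕ) by omega)
    have hZfj : Zf j = B c := by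
      simp only [hZfdef]
      have hmod : (j:ℕ) % 2 = 1 := by show (2*(c:ℕ)+1) % 2 = 1; omega
      rw [if_neg (by omega)]
      congr 1
      exact Fin.ext (show (2*(c:ℕ)+1)/2 = (c:ℕ) by omega)
    have hne1 : (Yf i).Nonempty := by rw [← Finset.card_pos, hYcard i]; omega
    have hne2 : (Yf j).Nonempty := by rw [← Finset.card_pos, hYcard j]; omega
    obtain ⟨u, hu⟩ := hne1
    obtain ⟨v, hv⟩ := hne2
    have h1 : χ u v = cbet i j := hcbet i j hij u hu v hv
    have hu' : u ∈ A c := by rw [← hZfi]; exact hZ'sub i (hYsub i hu)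
    have hv' : v ∈ B c := by rw [← hZfj]; exact hZ'sub j (hYsub j hv)
    have h2 : χ u v = c := (hprop c c.2).2.2.2 u hu' v hv'
    rw [← h1, h2]
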